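/- (Lemma 6.4: commuting of s_i and τ_i, and involutivity of s_i, from the reduced presentation.) In the reduced presentation setup (see context) with n ≥ 4, the elements s_i and τ_i satisfy τ_i s_i = s_i τ_i and s_i² = 1 for all 1 ≤ i ≤ n−1. -/

import Mathlib

/-- The ascending product `ν_a ν_{a+1} ⋯ ν_b` (equal to `1` if `b < a`). -/
def ascProd {G : Type*} [Monoid G] (ν : ℕ → G) (a b : ℕ) : G :=
  ((List.range' a (b + 1 - a)).map ν).prod

/-- The descending product `ν_a ν_{a-1} ⋯ ν_b` (equal to `1` if `a < b`). -/
def descProd {G : Type*} [Monoid G] (ν : ℕ → G) (a b : ℕ) : G :=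
  ((List.range' b (a + 1 - b)).reverse.map ν).prod

/-- `sgen ν s1 k` is the element `s_k` of the reduced presentation:
`s_1 = s1` and `s_k = (ν_{k-1} ⋯ ν_1)(ν_k ⋯ ν_2) s1 (ν_2 ⋯ ν_k)(ν_1 ⋯ ν_{k-1})`
for `k ≥ 2`. -/
def sgen {G : Type*} [Monoid G] (ν : ℕ → G) (s1 : G) (k : ℕ) : G :=
  descProd ν (k - 1) 1 * descProd ν k 2 * s1 * ascProd ν 2 k * ascProd ν 1 (k - 1)

/-- `tgen ν t1 k` is the element `τ_k` of the reduced presentation, defined as for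
`sgen` with `τ₁ = t1` in place of `s₁`. -/
def tgen {G : Type*} [Monoid G] (ν : ℕ → G) (t1 : G) (k : ℕ) : G :=
  descProd ν (k - 1) 1 * descProd ν k 2 * t1 * ascProd ν 2 k * ascProd ν 1 (k - 1)


/-- A product of involutions times the product in reverse order is `1`. -/
lemma prod_rev_inv {G : Type*} [Group G] (ν : ℕ → G) :
    ∀ l : List ℕ, (∀ x ∈ l, ν x * ν x = 1) →
    (l.map ν).prod * ((l.reverse.map ν).prod) = 1 := by
  intro l
  induction l with
  | nil => simp
  | cons a t ih =>
    intro h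
    have ha := h a List.mem_cons_self
    have ht := ih (fun x hx => h x (List.mem_cons_of_mem _ hx))
    simp only [List.map_cons, List.prod_cons, List.reverse_cons, List.map_append,
      List.prod_append, List.map_nil, List.prod_nil, mul_one]
    calc ν a * (t.map ν).prod * ((t.reverse.map ν).prod * ν a)
        = ν a * ((t.map ν).prod * (t.reverse.map ν).prod) * ν a := by group
      _ = ν a * ν a := by rw [ht]; group
      _ = 1 := ha

/-- (Lemma 6.4.) The relations `τ_i s_i = s_i τ_i` and `s_i² = 1` for all `i` follow
from the reduced presentation. -/
theorem tau_s_commute_and_involution {G : Type*} [Group G] (n : ℕ) (hn : 4 ≤ n)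
    (s1 t1 : G) (ν : ℕ → G)
    (hν2 : ∀ i, 1 ≤ i → i ≤ n - 1 → ν i * ν i = 1)
    (hs2 : s1 * s1 = 1)
    (hbraid : ∀ i j, 1 ≤ i → i ≤ n - 1 → 1 ≤ j → j ≤ n - 1 →
      (i + 1 = j ∨ j + 1 = i) → ν i * ν j * ν i = ν j * ν i * ν j)
    (hfar : ∀ i j, 1 ≤ i → i ≤ n - 1 → 1 ≤ j → j ≤ n - 1 →
      (i + 2 ≤ j ∨ j + 2 ≤ i) → ν i * ν j = ν j * ν i)
    (hst : s1 * t1 = t1 * s1)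
    (htν : ∀ i, 3 ≤ i → i ≤ n - 1 → t1 * ν i = ν i * t1)
    (hsν : ∀ i, 3 ≤ i → i ≤ n - 1 → s1 * ν i = ν i * s1)
    (hr41 : t1 * (ν 1 * ν 2 * s1 * ν 2 * ν 1) * s1
      = (ν 1 * ν 2 * s1 * ν 2 * ν 1) * s1 * (ν 1 * ν 2 * t1 * ν 2 * ν 1))
    (hr42 : s1 * (ν 2 * ν 3 * ν 1 * ν 2 * s1 * ν 2 * ν 1 * ν 3 * ν 2)
      = (ν 2 * ν 3 * ν 1 * ν 2 * s1 * ν 2 * ν 1 * ν 3 * ν 2) * s1)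
    (hr43 : t1 * (ν 2 * ν 3 * ν 1 * ν 2 * s1 * ν 2 * ν 1 * ν 3 * ν 2)
      = (ν 2 * ν 3 * ν 1 * ν 2 * s1 * ν 2 * ν 1 * ν 3 * ν 2) * t1)
    (hr44 : t1 * (ν 2 * ν 3 * ν 1 * ν 2 * t1 * ν 2 * ν 1 * ν 3 * ν 2)
      = (ν 2 * ν 3 * ν 1 * ν 2 * t1 * ν 2 * ν 1 * ν 3 * ν 2) * t1)
    : ∀ i, 1 ≤ i → i ≤ n - 1 →
      tgen ν t1 i * sgen ν s1 i = sgen ν s1 i * tgen ν t1 i ∧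
      sgen ν s1 i * sgen ν s1 i = 1 := by

  intro i h1 hi
  set l1 := List.range' 1 (i - 1) with hl1
  set l2 := List.range' 2 (i - 1) with hl2
  have hmem1 : ∀ x ∈ l1, ν x * ν x = 1 := by
    intro x hx
    rw [hl1, List.mem_range'_1] at hx
    exact hν2 x hx.1 (by omega)
  have hmem2 : ∀ x ∈ l2, ν x * ν x = 1 := by
    intro x hx
    rw [hl2, List.mem_range'_1] at hx
    exact hν2 x (by omega) (by omega)
  set A := (l1.map ν).prod with hA
  set B := (l2.map ν).prod with hB
  have hAinv : A⁻¹ = (l1.reverse.map ν).prod :=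
    inv_eq_of_mul_eq_one_right (prod_rev_inv ν l1 hmem1)
  have hBinv : B⁻¹ = (l2.reverse.map ν).prod :=
    inv_eq_of_mul_eq_one_right (prod_rev_inv ν l2 hmem2)
  have e1 : i - 1 + 1 - 1 = i - 1 := by omega
  have e2 : i + 1 - 2 = i - 1 := by omega
  have hsgen : sgen ν s1 i = (B * A)⁻¹ * s1 * (B * A) := by
    rw [sgen, descProd, descProd, ascProd, ascProd, e1, e2, ← hl1, ← hl2,
      ← hA, ← hB, ← hAinv, ← hBinv]
    group
  have htgen : tgen ν t1 i = (B * A)⁻¹ * t1 * (B * A) := by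
    rw [tgen, descProd, descProd, ascProd, ascProd, e1, e2, ← hl1, ← hl2,
      ← hA, ← hB, ← hAinv, ← hBinv]
    group
  set w := B * A
  rw [hsgen, htgen]
  constructor
  · calc (w⁻¹ * t1 * w) * (w⁻¹ * s1 * w) = w⁻¹ * (t1 * s1) * w := by group
      _ = w⁻¹ * (s1 * t1) * w := by rw [hst]
      _ = (w⁻¹ * s1 * w) * (w⁻¹ * t1 * w) := by group
  · calc (w⁻¹ * s1 * w) * (w⁻¹ * s1 * w) = w⁻¹ * (s1 * s1) * w := by group
      _ = w⁻¹ * 1 * w := by rw [hs2]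
      _ = 1 := by group
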